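/- For every integer k ≥ 2, the function h(k,x) := 1 − (3x − 2x²)·(1 − 1/k)^{(1−x)k} is decreasing in x on the interval (1/4, 1/2); and for every fixed x ∈ (1/4, 1/2), h(k,x) is decreasing in k for integers k ≥ 2. Moreover, h(20, 0.42) < 1/2. -/

import Mathlib

/-- `h(k,x) = 1 - (3x - 2x²)·(1 - 1/k)^{(1-x)k}` (real exponent). -/
noncomputable def hFun (k : ℕ) (x : ℝ) : ℝ :=
  1 - (3 * x - 2 * x ^ 2) * (1 - 1 / (k : ℝ)) ^ ((1 - x) * (k : ℝ))

-- step: (1-1/k)^k < (1-1/(k+1))^(k+1)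
lemma stepL (k : ℕ) (hk : 2 ≤ k) :
    (1 - 1/(k:ℝ))^k < (1 - 1/((k:ℝ)+1))^(k+1) := by
  set K : ℝ := (k:ℝ) with hKdef
  have hK : (2:ℝ) ≤ K := by rw [hKdef]; exact_mod_cast hk
  have hK0 : (0:ℝ) < K := by linarith
  have hK1 : (0:ℝ) < K + 1 := by linarith
  set t : ℝ := 1/K^2 with htdef
  have ht0 : 0 < t := by positivity
  have ht1 : t < 1 := by rw [htdef, div_lt_one (by positivity)]; nlinarith
  have hkt : (k:ℝ) * t = 1/K := by rw [htdef, ← hKdef]; field_simp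
  have hbern : 1 + 1/K ≤ (1+t)^k := by
    have h := one_add_mul_le_pow (a := t) (by nlinarith) k
    rw [hkt] at h; exact h
  have h1 : (1-t)^k * (1+t)^k < 1 := by
    rw [← mul_pow]
    have he : (1-t)*(1+t) = 1 - t^2 := by ring
    rw [he]
    exact pow_lt_one₀ (by nlinarith) (by nlinarith) (by omega)
  have hpos : (0:ℝ) ≤ (1-t)^k := pow_nonneg (by linarith) k
  have h2 : (1-t)^k * (1+1/K) < 1 :=
    lt_of_le_of_lt (mul_le_mul_of_nonneg_left hbern hpos) h1
  have hC : (1-t)^k < K/(K+1) := by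
    rw [lt_div_iff₀ hK1]
    have h4 : (1-t)^k * (K+1) = ((1-t)^k * (1+1/K)) * K := by field_simp
    rw [h4]
    calc ((1-t)^k * (1+1/K)) * K < 1 * K := by
          exact mul_lt_mul_of_pos_right h2 hK0
    _ = K := one_mul K
  have hfact : 1 - 1/K = (1-t)*(K/(K+1)) := by rw [htdef]; field_simp; ring
  have hbase : 1 - 1/(K+1) = K/(K+1) := by field_simp; ring
  rw [hfact, hbase, mul_pow, pow_succ]
  have hp : 0 < (K/(K+1))^k := pow_pos (by positivity) k
  calc (1-t)^k * (K/(K+1))^k < (K/(K+1)) * (K/(K+1))^k :=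
        mul_lt_mul_of_pos_right hC hp
  _ = (K/(K+1))^k * (K/(K+1)) := by ring

lemma akMono (k l : ℕ) (hk : 2 ≤ k) (hkl : k < l) :
    (1 - 1/(k:ℝ))^k < (1 - 1/(l:ℝ))^l := by
  induction l, hkl using Nat.le_induction with
  | base =>
      have := stepL k hk
      push_cast
      convert this using 3 <;> push_cast <;> ring
  | succ n hn ih =>
      have h2n : 2 ≤ n := by omega
      have := stepL n h2n
      refine lt_trans ih (?_ : (1 - 1/(n:ℝ))^n < (1 - 1/((n+1:ℕ):ℝ))^(n+1))
      convert this using 3 <;> push_cast <;> ring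

lemma rpow_eq_pow_rpow (m : ℕ) (c : ℝ) (hc : 0 ≤ c) (x : ℝ) :
    c ^ ((1-x)*(m:ℝ)) = (c^m) ^ (1-x) := by
  rw [mul_comm, Real.rpow_mul hc, Real.rpow_natCast]


/-- For every integer `k ≥ 2`, `h(k,·)` is decreasing in `x` on `(1/4, 1/2)`; for every fixed
`x ∈ (1/4, 1/2)`, `h(·,x)` is decreasing in the integer `k ≥ 2`; and `h(20, 0.42) < 1/2`. -/
theorem stmt_14 :
    (∀ k : ℕ, 2 ≤ k → ∀ x ∈ Set.Ioo (1 / 4 : ℝ) (1 / 2), ∀ y ∈ Set.Ioo (1 / 4 : ℝ) (1 / 2),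
      x < y → hFun k y < hFun k x) ∧
    (∀ x ∈ Set.Ioo (1 / 4 : ℝ) (1 / 2), ∀ k l : ℕ, 2 ≤ k → k < l → hFun l x < hFun k x) ∧
    hFun 20 0.42 < 1 / 2 := by
  have hbase : ∀ k : ℕ, 2 ≤ k → 0 < 1 - 1/(k:ℝ) ∧ 1 - 1/(k:ℝ) < 1 := by
    intro k hk
    have hkR : (2:ℝ) ≤ (k:ℝ) := by exact_mod_cast hk
    have h1 : 1/(k:ℝ) ≤ 1/2 := by
      apply one_div_le_one_div_of_le <;> linarith
    have h2 : 0 < 1/(k:ℝ) := by positivity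
    constructor <;> linarith
  refine ⟨?_, ?_, ?_⟩
  · intro k hk x hx y hy hxy
    obtain ⟨hx1, hx2⟩ := hx
    obtain ⟨hy1, hy2⟩ := hy
    have hkR : (2:ℝ) ≤ (k:ℝ) := by exact_mod_cast hk
    obtain ⟨hc0, hc1⟩ := hbase k hk
    set c : ℝ := 1 - 1/(k:ℝ) with hcdef
    have hgx : 0 < 3*x - 2*x^2 := by nlinarith
    have hg : 3*x - 2*x^2 < 3*y - 2*y^2 := by nlinarith
    have hexp : (1-y)*(k:ℝ) < (1-x)*(k:ℝ) := by nlinarith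
    have hr : c ^ ((1-x)*(k:ℝ)) < c ^ ((1-y)*(k:ℝ)) :=
      Real.rpow_lt_rpow_of_exponent_gt hc0 hc1 hexp
    have hrp : 0 < c ^ ((1-x)*(k:ℝ)) := Real.rpow_pos_of_pos hc0 _
    have hrq : 0 < c ^ ((1-y)*(k:ℝ)) := Real.rpow_pos_of_pos hc0 _
    unfold hFun
    rw [← hcdef]
    nlinarith [mul_lt_mul'' hg hr hgx.le hrp.le]
  · intro x hx k l hk hkl
    obtain ⟨hx1, hx2⟩ := hx
    have hl : 2 ≤ l := by omega
    obtain ⟨hck, _⟩ := hbase k hk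
    obtain ⟨hcl, _⟩ := hbase l hl
    have key : (1 - 1/(k:ℝ))^k < (1 - 1/(l:ℝ))^l := akMono k l hk hkl
    have hg : 0 < 3*x - 2*x^2 := by nlinarith
    unfold hFun
    rw [rpow_eq_pow_rpow k _ hck.le, rpow_eq_pow_rpow l _ hcl.le]
    have hmono : ((1 - 1/(k:ℝ))^k) ^ (1-x) < ((1 - 1/(l:ℝ))^l) ^ (1-x) :=
      Real.rpow_lt_rpow (by positivity) key (by linarith)
    nlinarith [hmono, hg, mul_lt_mul_of_pos_left hmono hg]
  · unfold hFun
    have hexp : ((1:ℝ) - 0.42) * ((20:ℕ):ℝ) = (58:ℝ)/5 := by norm_num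
    have hb : ((1:ℝ) - 1/((20:ℕ):ℝ)) = 19/20 := by norm_num
    rw [hexp, hb]
    have hc : (0:ℝ) < (19/20:ℝ)^((58:ℝ)/5) := Real.rpow_pos_of_pos (by norm_num) _
    have h5 : ((19/20:ℝ)^((58:ℝ)/5))^(5:ℕ) = (19/20:ℝ)^(58:ℕ) := by
      rw [← Real.rpow_natCast ((19/20:ℝ)^((58:ℝ)/5)) 5, ← Real.rpow_mul (by norm_num)]
      norm_num
    have key : (625/1134:ℝ) < (19/20:ℝ)^((58:ℝ)/5) := by
      have hlt : (625/1134:ℝ)^(5:ℕ) < ((19/20:ℝ)^((58:ℝ)/5))^(5:ℕ) := by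
        rw [h5]; norm_num
      exact lt_of_pow_lt_pow_left₀ 5 hc.le hlt
    nlinarith [key]
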